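/- Let g : ℝ → ℝ and g̃ : ℝ → ℝ be defined for m distinct points y₁,…,y_m and directions z₁,…,z_m by g(a) = F((1/m)∑_i δ_{y_i + a z_i}) and g̃(a) = (1/m)∑_i (y_i + a z_i)² − g(a), where F : P₂(ℝ) → ℝ is C² in the Wasserstein sense. If g''(0) ≥ 0 and g̃''(0) ≥ 0, then (C)·(1/m)∑_i z_i² ≥ (1/m²)∑_{i,j} ∂²_{μμ}F(γ_m, y_i, y_j) z_i z_j + (1/m)∑_i ∂_x∂_μF(γ_m, y_i) z_i² ≥ 0, where γ_m = (1/m)∑_i δ_{y_i} and the upper constant is C = 2 (coming from (d²/da²)(1/m)∑(y_i+az_i)² = (2/m)∑z_i²). -/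

import Mathlib

open MeasureTheory
open scoped BigOperators

/-- Empirical measure `(1/m)∑_{i=1}^m δ_{f(i)}`. -/
noncomputable def empMeasure {α : Type*} [MeasurableSpace α] {m : ℕ} (f : Fin m → α) :
    Measure α :=
  (m : ENNReal)⁻¹ • ∑ i, Measure.dirac (f i)

/-- let `g(a) = F((1/m)∑δ_{y_i+az_i})` and
`g̃(a) = (1/m)∑(y_i+az_i)² − g(a)`, where `F` is `C²` in the Wasserstein sense, so that
(per the context) `g''(0)` equals the second-order Taylor expression
`Q = (1/m²)∑_{i,j}∂²_{μμ}F(γ_m,y_i,y_j)z_iz_j + (1/m)∑_i ∂_x∂_μF(γ_m,y_i)z_i²`.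
If `g''(0) ≥ 0` and `g̃''(0) ≥ 0`, then `2·(1/m)∑z_i² ≥ Q ≥ 0`. -/
theorem stmt15 (m : ℕ) (hm : 0 < m) (F : Measure ℝ → ℝ)
    (D2 : Measure ℝ → ℝ → ℝ → ℝ) (D11 : Measure ℝ → ℝ → ℝ)
    (y z : Fin m → ℝ) (hy : Function.Injective y)
    (g g' : ℝ → ℝ)
    (hg : ∀ a, g a = F (empMeasure fun i => y i + a * z i))
    (hg' : ∀ a, HasDerivAt g (g' a) a)
    (hg'' : HasDerivAt g'
      ((1 / (m : ℝ) ^ 2) * ∑ i, ∑ j, D2 (empMeasure y) (y i) (y j) * z i * z j +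
        (1 / (m : ℝ)) * ∑ i, D11 (empMeasure y) (y i) * z i ^ 2) 0)
    (hgpos : 0 ≤ deriv g' 0)
    (hgtildepos : 0 ≤ deriv (deriv (fun a => (1 / (m : ℝ)) * ∑ i, (y i + a * z i) ^ 2 - g a)) 0) :
    ((1 / (m : ℝ) ^ 2) * ∑ i, ∑ j, D2 (empMeasure y) (y i) (y j) * z i * z j +
        (1 / (m : ℝ)) * ∑ i, D11 (empMeasure y) (y i) * z i ^ 2)
      ≤ 2 * ((1 / (m : ℝ)) * ∑ i, z i ^ 2) ∧
    0 ≤ (1 / (m : ℝ) ^ 2) * ∑ i, ∑ j, D2 (empMeasure y) (y i) (y j) * z i * z j +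
        (1 / (m : ℝ)) * ∑ i, D11 (empMeasure y) (y i) * z i ^ 2 := by

  set Q := (1 / (m : ℝ) ^ 2) * ∑ i, ∑ j, D2 (empMeasure y) (y i) (y j) * z i * z j +
        (1 / (m : ℝ)) * ∑ i, D11 (empMeasure y) (y i) * z i ^ 2 with hQ
  have hlin : ∀ i : Fin m, ∀ a : ℝ, HasDerivAt (fun a => y i + a * z i) (z i) a := by
    intro i a
    simpa using ((hasDerivAt_mul_const (z i)).const_add (y i))
  have hH : ∀ a : ℝ, HasDerivAt (fun a => (1 / (m : ℝ)) * ∑ i, (y i + a * z i) ^ 2)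
      ((1 / (m : ℝ)) * ∑ i, 2 * (y i + a * z i) * z i) a := by
    intro a
    refine HasDerivAt.const_mul _ (HasDerivAt.fun_sum fun i _ => ?_)
    have := ((hlin i a).fun_pow 2)
    simpa [mul_comm, mul_assoc, mul_left_comm] using this
  have hderiv1 : deriv (fun a => (1 / (m : ℝ)) * ∑ i, (y i + a * z i) ^ 2 - g a)
      = fun a => (1 / (m : ℝ)) * ∑ i, 2 * (y i + a * z i) * z i - g' a := by
    funext a
    exact ((hH a).sub (hg' a)).deriv
  have hH2 : HasDerivAt (fun a : ℝ => (1 / (m : ℝ)) * ∑ i, 2 * (y i + a * z i) * z i)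
      ((1 / (m : ℝ)) * ∑ i, 2 * z i ^ 2) 0 := by
    refine HasDerivAt.const_mul _ (HasDerivAt.fun_sum fun i _ => ?_)
    have := ((hlin i 0).const_mul 2).mul_const (z i)
    simpa [pow_two, mul_assoc] using this
  have hsecond : deriv (deriv (fun a => (1 / (m : ℝ)) * ∑ i, (y i + a * z i) ^ 2 - g a)) 0
      = (1 / (m : ℝ)) * ∑ i, 2 * z i ^ 2 - Q := by
    rw [hderiv1]
    exact (hH2.sub hg'').deriv
  have hQderiv : deriv g' 0 = Q := hg''.deriv
  constructor
  · have h2 : 0 ≤ (1 / (m : ℝ)) * ∑ i, 2 * z i ^ 2 - Q := hsecond ▸ hgtildepos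
    have : (1 / (m : ℝ)) * ∑ i, 2 * z i ^ 2 = 2 * ((1 / (m : ℝ)) * ∑ i, z i ^ 2) := by
      rw [Finset.mul_sum, Finset.mul_sum, Finset.mul_sum]
      exact Finset.sum_congr rfl fun i _ => by ring
    linarith [this ▸ h2]
  · rw [← hQderiv]; exact hgpos
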